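/- Let R be an integral domain with fraction field K, and let β ∉ K ∪ {∞} be a root of Ax² + Bx + C ∈ R[x] with A ≠ 0 and conjugate root β*. For each integer k, there is a bijection between the set of matrices [[a, b], [c, d]] ∈ M_2(R) satisfying ad - bc = (-1)^k, Bc = A(d - a), -Ab = Cc, -Bb = C(d - a), and the set of units u of the order R_β = {x ∈ K(β) : x(Rβ + R) ⊆ Rβ + R} with Norm_{K(β)/K}(u) = (-1)^k. The bijection sends [[a, b], [c, d]] to u = cβ + d. -/

import Mathlib

/-- There is a bijection between the `R`-points of the Fermat–Pell curve
`FP_k(ℬ)` (matrices `[[a,b],[c,d]]` over `R` with `ad - bc = (-1)^k`,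
`Bc = A(d - a)`, `-Ab = Cc`, `-Bb = C(d - a)`) and the units `u` of the order
`R_β` of `L_β = Rβ + R` with `Norm_{K(β)/K}(u) = (-1)^k`, sending
`[[a,b],[c,d]]` to `u = cβ + d`. -/
theorem stmt13 (R K L : Type) [CommRing R] [IsDomain R] [Field K] [Field L]
    [Algebra R K] [IsFractionRing R K] [Algebra K L] [Algebra R L]
    [IsScalarTower R K L]
    (hdim : Module.finrank K L = 2)
    (β : L) (hβ : β ∉ Set.range (algebraMap K L))
    (A B C : R) (hA : A ≠ 0)
    (hroot : algebraMap R L A * β ^ 2 + algebraMap R L B * β + algebraMap R L C = 0)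
    (σ : L ≃ₐ[K] L) (hσβ : σ β ≠ β)
    (k : ℕ) :
    Set.BijOn
      (fun m : Matrix (Fin 2) (Fin 2) R =>
        algebraMap R L (m 1 0) * β + algebraMap R L (m 1 1))
      {m : Matrix (Fin 2) (Fin 2) R |
        m 0 0 * m 1 1 - m 0 1 * m 1 0 = (-1) ^ k ∧
        B * m 1 0 = A * (m 1 1 - m 0 0) ∧
        -(A * m 0 1) = C * m 1 0 ∧
        -(B * m 0 1) = C * (m 1 1 - m 0 0)}
      {u : L |
        (∀ y ∈ Submodule.span R ({β, 1} : Set L),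
          u * y ∈ Submodule.span R ({β, 1} : Set L)) ∧
        (∃ v : L, (∀ y ∈ Submodule.span R ({β, 1} : Set L),
          v * y ∈ Submodule.span R ({β, 1} : Set L)) ∧ u * v = 1) ∧
        u * σ u = algebraMap R L ((-1) ^ k)} := by
  classical
  have hinj : Function.Injective (algebraMap R L) := by
    rw [IsScalarTower.algebraMap_eq R K L]
    exact (algebraMap K L).injective.comp (IsFractionRing.injective R K)
  set f := algebraMap R L with hf
  have hσf : ∀ x : R, σ (f x) = f x := by
    intro x
    rw [hf, IsScalarTower.algebraMap_eq R K L]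
    exact σ.commutes _
  have hA' : f A ≠ 0 := fun h => hA (hinj (by rw [h, map_zero]))
  -- linear independence of β, 1 over R inside L
  have hli : ∀ p q : R, f p * β + f q = 0 → p = 0 ∧ q = 0 := by
    intro p q h
    have hp : p = 0 := by
      by_contra hp
      have hfp : f p ≠ 0 := fun h' => hp (hinj (by rw [h', map_zero]))
      apply hβ
      refine ⟨-(algebraMap R K q) / (algebraMap R K p), ?_⟩
      rw [map_div₀, map_neg, ← IsScalarTower.algebraMap_apply,
        ← IsScalarTower.algebraMap_apply, div_eq_iff hfp]
      linear_combination -h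
    refine ⟨hp, ?_⟩
    have hq : f q = 0 := by rw [hp] at h; simpa using h
    exact hinj (by rw [hq, map_zero])
  have hli2 : ∀ p q p' q' : R, f p * β + f q = f p' * β + f q' → p = p' ∧ q = q' := by
    intro p q p' q' h
    have h0 : f (p - p') * β + f (q - q') = 0 := by
      simp only [map_sub]; linear_combination h
    obtain ⟨h1, h2⟩ := hli _ _ h0
    exact ⟨sub_eq_zero.mp h1, sub_eq_zero.mp h2⟩
  have hmem : ∀ x : L, x ∈ Submodule.span R ({β, 1} : Set L) ↔
      ∃ p q : R, f p * β + f q = x := by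
    intro x
    rw [Submodule.mem_span_pair]
    constructor
    · rintro ⟨p, q, rfl⟩; exact ⟨p, q, by simp [Algebra.smul_def, hf]⟩
    · rintro ⟨p, q, rfl⟩; exact ⟨p, q, by simp [Algebra.smul_def, hf]⟩
  -- stability criterion
  have stab : ∀ c d p q : R, (f c * β + f d) * β = f p * β + f q →
      ∀ y ∈ Submodule.span R ({β, 1} : Set L),
        (f c * β + f d) * y ∈ Submodule.span R ({β, 1} : Set L) := by
    intro c d p q h y hy
    rw [hmem] at hy ⊢
    obtain ⟨r, s, rfl⟩ := hy
    refine ⟨r * p + s * c, r * q + s * d, ?_⟩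
    simp only [map_add, map_mul]
    linear_combination (-(f r)) * h
  -- conjugate root identities
  have hσroot : f A * σ β ^ 2 + f B * σ β + f C = 0 := by
    have h := congrArg σ hroot
    simpa only [map_add, map_mul, map_pow, map_zero, hσf] using h
  have hsum : f A * (β + σ β) = -(f B) := by
    have h0 : (β - σ β) * (f A * (β + σ β) + f B) = 0 := by
      linear_combination hroot - hσroot
    rcases mul_eq_zero.mp h0 with h | h
    · exact absurd (sub_eq_zero.mp h).symm hσβ
    · linear_combination h
  have hsq : f ((-1 : R) ^ k) * f ((-1 : R) ^ k) = 1 := by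
    rw [← map_mul, ← mul_pow]
    norm_num
  refine ⟨?_, ?_, ?_⟩
  · -- MapsTo
    rintro m ⟨hm1, hm2, hm3, hm4⟩
    have hm1' := congrArg f hm1
    have hm2' := congrArg f hm2
    have hm3' := congrArg f hm3
    simp only [map_mul, map_sub, map_neg] at hm1' hm2' hm3'
    have huβ : (f (m 1 0) * β + f (m 1 1)) * β = f (m 0 0) * β + f (m 0 1) := by
      apply mul_left_cancel₀ hA'
      linear_combination f (m 1 0) * hroot - β * hm2' + hm3'
    have hσu : σ (f (m 1 0) * β + f (m 1 1)) = -(f (m 1 0)) * β + f (m 0 0) := by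
      rw [map_add, map_mul, hσf, hσf]
      apply mul_left_cancel₀ hA'
      linear_combination f (m 1 0) * hsum - hm2'
    have hprod : (f (m 1 0) * β + f (m 1 1)) * (-(f (m 1 0)) * β + f (m 0 0))
        = f ((-1 : R) ^ k) := by
      apply mul_left_cancel₀ (mul_ne_zero hA' hA')
      linear_combination (f A * f A) * hm1' - f A * f (m 1 0) * f (m 1 0) * hroot
        + f A * f (m 1 0) * β * hm2' - f A * f (m 1 0) * hm3'
    refine ⟨stab _ _ _ _ huβ,
      ⟨f (-((-1 : R) ^ k * m 1 0)) * β + f ((-1 : R) ^ k * m 0 0), ?_, ?_⟩, ?_⟩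
    · apply stab _ _ ((-1 : R) ^ k * m 1 1) (-((-1 : R) ^ k * m 0 1))
      apply mul_left_cancel₀ hA'
      simp only [map_neg, map_mul]
      linear_combination (-(f ((-1 : R) ^ k) * f (m 1 0))) * hroot
        + f ((-1 : R) ^ k) * β * hm2' - f ((-1 : R) ^ k) * hm3'
    · simp only [map_neg, map_mul]
      linear_combination f ((-1 : R) ^ k) * hprod + hsq
    · show (f (m 1 0) * β + f (m 1 1)) * σ (f (m 1 0) * β + f (m 1 1)) = f ((-1 : R) ^ k)
      rw [hσu]; exact hprod
  · -- InjOn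
    rintro m ⟨hm1, hm2, hm3, hm4⟩ m' ⟨hn1, hn2, hn3, hn4⟩ h
    simp only at h
    obtain ⟨hc, hd⟩ := hli2 _ _ _ _ h
    rw [← hc] at hn2 hn3
    rw [← hd] at hn2
    have ha : m 0 0 = m' 0 0 := by
      apply mul_left_cancel₀ hA
      linear_combination hm2 - hn2
    have hb : m 0 1 = m' 0 1 := by
      apply mul_left_cancel₀ hA
      linear_combination hn3 - hm3
    ext i j
    fin_cases i <;> fin_cases j <;> first | exact ha | exact hb | exact hc | exact hd
  · -- SurjOn
    rintro u ⟨hstab, ⟨v, hvstab, huv⟩, hnorm⟩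
    have h1mem : (1 : L) ∈ Submodule.span R ({β, 1} : Set L) :=
      (hmem 1).mpr ⟨0, 1, by simp⟩
    have hu_mem : u ∈ Submodule.span R ({β, 1} : Set L) := by
      have := hstab 1 h1mem; simpa using this
    obtain ⟨c, d, hu⟩ := (hmem u).mp hu_mem
    have hβ_mem : β ∈ Submodule.span R ({β, 1} : Set L) :=
      (hmem β).mpr ⟨1, 0, by simp⟩
    obtain ⟨a, b, huβ⟩ := (hmem _).mp (hstab β hβ_mem)
    rw [← hu] at huβ
    replace huβ : (f c * β + f d) * β = f a * β + f b := huβ.symm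
    have key : f (A * d - B * c - A * a) * β + f (-(C * c) - A * b) = 0 := by
      simp only [map_sub, map_mul, map_neg]
      linear_combination f A * huβ - f c * hroot
    obtain ⟨e1, e2⟩ := hli _ _ key
    have e1' := congrArg f e1
    have e2' := congrArg f e2
    simp only [map_sub, map_mul, map_neg, map_zero] at e1' e2'
    have hm2R : B * c = A * (d - a) := by linear_combination -e1
    have hm3R : -(A * b) = C * c := by linear_combination e2
    have hm4R : -(B * b) = C * (d - a) := by
      apply mul_left_cancel₀ hA
      linear_combination B * e2 - C * e1
    have hσu : σ u = -(f c) * β + f a := by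
      rw [← hu, map_add, map_mul, hσf, hσf]
      apply mul_left_cancel₀ hA'
      linear_combination f c * hsum + e1'
    have hprod : (f c * β + f d) * (-(f c) * β + f a) = f ((-1 : R) ^ k) := by
      rw [← hσu, hu]; exact hnorm
    have hL : f (A * (A * (a * d - b * c))) = f (A * (A * (-1 : R) ^ k)) := by
      simp only [map_mul, map_sub]
      linear_combination f A * f A * hprod + f A * f c * f c * hroot
        + f A * f c * β * e1' + f A * f c * e2'
    have hm1R : a * d - b * c = (-1 : R) ^ k :=
      mul_left_cancel₀ hA (mul_left_cancel₀ hA (hinj hL))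
    refine ⟨![![a, b], ![c, d]], ⟨?_, ?_, ?_, ?_⟩, ?_⟩
    · simpa using hm1R
    · simpa using hm2R
    · simpa using hm3R
    · simpa using hm4R
    · simpa using hu
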